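/- Let λ = (λ_1,…,λ_k) be a nonnegative rate vector, let ρ_1,…,ρ_q ≥ 0 with Σ_{r=1}^{q} ρ_r = 1, let t ≥ 0, and let G(u_1,…,u_q,t) = exp( −Σ_{j=1}^{k} λ_j (1 − (Σ_{r=1}^{q} ρ_r u_r)^j) t ) be the joint probability generating function of the q Type II split components of a GCP obtained by rolling a q-faced die (face r with probability ρ_r) once for each unit of every jump. Then for any x ≠ y in {1,…,q}, the covariance ∂²G/∂u_x∂u_y evaluated at u_1 = ⋯ = u_q = 1 minus (∂G/∂u_x)(∂G/∂u_y) evaluated there equals Σ_{j=1}^{k} Σ_{(j_1,…,j_q) ∈ ℕ₀^q, j_1+⋯+j_q = j} (j!/(j_1!⋯j_q!)) (∏_{r=1}^{q} ρ_r^{j_r}) j_x j_y λ_j t = ρ_x ρ_y t Σ_{j=1}^{k} j(j−1) λ_j. Hence the q Type II split components are not pairwise independent in general. -/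

import Mathlib

open Finset

/-- The joint probability generating function of the `q` Type II split components of
a GCP with rates `lam`, obtained by rolling a `q`-faced die (face `r` with
probability `ρ r`) once for each unit of every jump:
`G(u₁,…,u_q,t) = exp(−Σ_j λ_j (1 − (Σ_r ρ_r u_r)^j) t)`. -/
noncomputable def typeIIpgfQ (k q : ℕ) (lam : Fin k → ℝ) (ρ : Fin q → ℝ)
    (u : Fin q → ℝ) (t : ℝ) : ℝ :=
  Real.exp (-(∑ j : Fin k, lam j * (1 - (∑ r : Fin q, ρ r * u r) ^ (j.1 + 1))) * t)

/-- For `x ≠ y`, the covariance of the `x`-th and `y`-th Type II split components,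
`∂²G/∂u_x∂u_y` at `u = 1` minus the product `(∂G/∂u_x)(∂G/∂u_y)` there, equals
`Σ_j Σ_{j₁+⋯+j_q=j} (j!/(j₁!⋯j_q!)) (∏_r ρ_r^{j_r}) j_x j_y λ_j t
  = ρ_x ρ_y t Σ_j j(j−1) λ_j`.
Hence the `q` Type II split components are not pairwise independent in general. -/

lemma sum_upd {q : ℕ} (ρ v : Fin q → ℝ) (x : Fin q) (b : ℝ) :
    ∑ r : Fin q, ρ r * Function.update v x b r = (∑ r : Fin q, ρ r * v r) + ρ x * (b - v x) := by
  have h : (fun r => ρ r * Function.update v x b r)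
      = Function.update (fun r => ρ r * v r) x (ρ x * b) := by
    funext r
    rcases eq_or_ne r x with rfl | h
    · simp
    · simp [Function.update_of_ne h]
  rw [h, Finset.sum_update_of_mem (Finset.mem_univ x),
    ← Finset.erase_eq, Finset.sum_erase_eq_sub (Finset.mem_univ x)]
  ring

lemma prod_upd_pow {q : ℕ} (x y : Fin q) (hxy : x ≠ y) (a b : ℝ) (c : Fin q → ℕ) :
    ∏ r : Fin q,
      (Function.update (Function.update (fun _ => (1:ℝ)) y a) x b r) ^ c r
      = b ^ c x * a ^ c y := by
  rw [← Finset.mul_prod_erase Finset.univ _ (Finset.mem_univ x),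
    ← Finset.mul_prod_erase (Finset.univ.erase x) _
      (Finset.mem_erase.2 ⟨hxy.symm, Finset.mem_univ y⟩)]
  have h1 : Function.update (Function.update (fun _ => (1:ℝ)) y a) x b x = b := by simp
  have h2 : Function.update (Function.update (fun _ => (1:ℝ)) y a) x b y = a := by
    rw [Function.update_of_ne hxy.symm]; simp
  rw [h1, h2]
  have h3 : ∏ r ∈ (Finset.univ.erase x).erase y,
      (Function.update (Function.update (fun _ => (1:ℝ)) y a) x b r) ^ c r = 1 := by
    apply Finset.prod_eq_one
    intro r hr
    have hry : r ≠ y := (Finset.mem_erase.1 hr).1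
    have hrx : r ≠ x := (Finset.mem_erase.1 (Finset.mem_erase.1 hr).2).1
    rw [Function.update_of_ne hrx, Function.update_of_ne hry]
    simp
  rw [h3]; ring


lemma expDeriv (k : ℕ) (lam : Fin k → ℝ) (t c ρ0 b : ℝ) :
    HasDerivAt (fun s : ℝ => Real.exp (-(∑ j : Fin k, lam j * (1 - (c + ρ0 * s) ^ (j.1 + 1))) * t))
      (Real.exp (-(∑ j : Fin k, lam j * (1 - (c + ρ0 * b) ^ (j.1 + 1))) * t) *
        ((∑ j : Fin k, lam j * ((j.1 + 1) * (c + ρ0 * b) ^ j.1)) * ρ0 * t)) b := by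
  have hS : HasDerivAt (fun s : ℝ => c + ρ0 * s) ρ0 b := by
    simpa using ((hasDerivAt_id b).const_mul ρ0).const_add c
  have hsum : HasDerivAt (fun s => ∑ j : Fin k, lam j * (1 - (c + ρ0*s)^(j.1+1)))
      (∑ j : Fin k, lam j * (-(((j.1:ℝ)+1) * (c+ρ0*b)^j.1 * ρ0))) b := by
    apply HasDerivAt.fun_sum; intro j _
    have h1 := (hS.fun_pow (j.1+1)).const_sub 1
    have h2 := h1.const_mul (lam j)
    convert h2 using 1
    rfl
    push_cast
    ring
  have h3 := ((hsum.fun_neg.mul_const t).exp)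
  convert h3 using 2
  simp only [mul_neg, Finset.sum_neg_distrib, neg_neg]
  rw [Finset.sum_mul, Finset.sum_mul, Finset.sum_mul]
  exact Finset.sum_congr rfl fun j _ => by ring

lemma keyMulti {q : ℕ} (ρ : Fin q → ℝ) (hρsum : ∑ r : Fin q, ρ r = 1)
    (x y : Fin q) (hxy : x ≠ y) (n : ℕ) :
    ∑ c ∈ piAntidiag (Finset.univ : Finset (Fin q)) n,
      (Nat.multinomial Finset.univ c : ℝ) * (∏ r : Fin q, ρ r ^ c r) * c x * c y
      = (n : ℝ) * ((n - 1 : ℕ) : ℝ) * ρ x * ρ y := by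
  -- multinomial expansion
  have step1 : ∀ a b : ℝ, ((1 - ρ x + ρ y * (a - 1)) + ρ x * b) ^ n
      = ∑ c ∈ piAntidiag (Finset.univ : Finset (Fin q)) n,
        ((Nat.multinomial Finset.univ c : ℝ) * (∏ r : Fin q, ρ r ^ c r)) * a ^ c y * b ^ c x := by
    intro a b
    set u := Function.update (Function.update (fun _ => (1:ℝ)) y a) x b with hu
    have hsum : ∑ r : Fin q, ρ r * u r = (1 - ρ x + ρ y * (a - 1)) + ρ x * b := by
      rw [hu, sum_upd, sum_upd]
      have h2 : Function.update (fun _ => (1:ℝ)) y a x = 1 := by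
        rw [Function.update_of_ne hxy]
      rw [h2]
      simp only [mul_one]
      rw [hρsum]; ring
    rw [← hsum, Finset.sum_pow_eq_sum_piAntidiag]
    apply Finset.sum_congr rfl
    intro c _
    rw [show (fun i => (ρ i * u i) ^ c i) = fun i => ρ i ^ c i * u i ^ c i from
      funext fun i => mul_pow _ _ _, Finset.prod_mul_distrib, prod_upd_pow x y hxy a b c]
    ring
  -- inner derivative in b, two ways
  have h12 : ∀ a : ℝ, (n : ℝ) * ((1 - ρ y) + ρ y * a) ^ (n - 1) * ρ x
      = ∑ c ∈ piAntidiag (Finset.univ : Finset (Fin q)) n,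
        ((Nat.multinomial Finset.univ c : ℝ) * (∏ r : Fin q, ρ r ^ c r)) * a ^ c y * (c x : ℝ) := by
    intro a
    have hS : HasDerivAt (fun b : ℝ => (1 - ρ x + ρ y * (a - 1)) + ρ x * b) (ρ x) 1 := by
      simpa using ((hasDerivAt_id (1:ℝ)).const_mul (ρ x)).const_add (1 - ρ x + ρ y * (a - 1))
    have hA : HasDerivAt (fun b : ℝ => ((1 - ρ x + ρ y * (a - 1)) + ρ x * b) ^ n)
        ((n : ℝ) * ((1 - ρ x + ρ y * (a - 1)) + ρ x * 1) ^ (n - 1) * ρ x) 1 := hS.pow n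
    have hB : HasDerivAt (fun b : ℝ => ((1 - ρ x + ρ y * (a - 1)) + ρ x * b) ^ n)
        (∑ c ∈ piAntidiag (Finset.univ : Finset (Fin q)) n,
          ((Nat.multinomial Finset.univ c : ℝ) * (∏ r : Fin q, ρ r ^ c r)) * a ^ c y
            * ((c x : ℝ) * (1:ℝ) ^ (c x - 1))) 1 := by
      rw [show (fun b : ℝ => ((1 - ρ x + ρ y * (a - 1)) + ρ x * b) ^ n)
          = fun b => ∑ c ∈ piAntidiag (Finset.univ : Finset (Fin q)) n,
            ((Nat.multinomial Finset.univ c : ℝ) * (∏ r : Fin q, ρ r ^ c r)) * a ^ c y * b ^ c x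
        from funext fun b => step1 a b]
      apply HasDerivAt.fun_sum
      intro c _
      exact (hasDerivAt_pow (c x) 1).const_mul _
    have := hA.unique hB
    rw [show (1 - ρ x + ρ y * (a - 1)) + ρ x * 1 = (1 - ρ y) + ρ y * a from by ring] at this
    simpa using this
  -- outer derivative in a, two ways
  have hw : HasDerivAt (fun a : ℝ => (1 - ρ y) + ρ y * a) (ρ y) 1 := by
    simpa using ((hasDerivAt_id (1:ℝ)).const_mul (ρ y)).const_add (1 - ρ y)
  have hA : HasDerivAt (fun a : ℝ => (n : ℝ) * ((1 - ρ y) + ρ y * a) ^ (n - 1) * ρ x)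
      ((n : ℝ) * (((n - 1 : ℕ) : ℝ) * ((1 - ρ y) + ρ y * 1) ^ (n - 1 - 1) * ρ y) * ρ x) 1 :=
    ((hw.pow (n - 1)).const_mul (n : ℝ)).mul_const (ρ x)
  have hB : HasDerivAt (fun a : ℝ => (n : ℝ) * ((1 - ρ y) + ρ y * a) ^ (n - 1) * ρ x)
      (∑ c ∈ piAntidiag (Finset.univ : Finset (Fin q)) n,
        ((Nat.multinomial Finset.univ c : ℝ) * (∏ r : Fin q, ρ r ^ c r))
          * ((c y : ℝ) * (1:ℝ) ^ (c y - 1)) * (c x : ℝ)) 1 := by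
    rw [show (fun a : ℝ => (n : ℝ) * ((1 - ρ y) + ρ y * a) ^ (n - 1) * ρ x)
        = fun a => ∑ c ∈ piAntidiag (Finset.univ : Finset (Fin q)) n,
          ((Nat.multinomial Finset.univ c : ℝ) * (∏ r : Fin q, ρ r ^ c r)) * a ^ c y * (c x : ℝ)
      from funext fun a => h12 a]
    apply HasDerivAt.fun_sum
    intro c _
    exact ((hasDerivAt_pow (c y) 1).const_mul _).mul_const _
  have hfin := hA.unique hB
  rw [show (1 - ρ y) + ρ y * 1 = (1:ℝ) from by ring] at hfin
  simp only [one_pow, mul_one] at hfin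
  have hswap : ∑ c ∈ piAntidiag (Finset.univ : Finset (Fin q)) n,
      (Nat.multinomial Finset.univ c : ℝ) * (∏ r : Fin q, ρ r ^ c r) * c x * c y
      = ∑ c ∈ piAntidiag (Finset.univ : Finset (Fin q)) n,
        ((Nat.multinomial Finset.univ c : ℝ) * (∏ r : Fin q, ρ r ^ c r)) * (c y : ℝ) * (c x : ℝ) :=
    Finset.sum_congr rfl fun c _ => by ring
  rw [hswap, ← hfin]
  ring

lemma derivOne (k q : ℕ) (lam : Fin k → ℝ) (ρ : Fin q → ℝ) (hρsum : ∑ r : Fin q, ρ r = 1)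
    (t : ℝ) (x : Fin q) :
    deriv (fun b => typeIIpgfQ k q lam ρ (Function.update (fun _ => 1) x b) t) 1
      = (∑ j : Fin k, lam j * ((j.1 : ℝ) + 1)) * ρ x * t := by
  have hfn : ∀ b : ℝ, typeIIpgfQ k q lam ρ (Function.update (fun _ => 1) x b) t
      = Real.exp (-(∑ j : Fin k, lam j * (1 - ((1 - ρ x) + ρ x * b) ^ (j.1 + 1))) * t) := by
    intro b
    unfold typeIIpgfQ
    rw [sum_upd]
    simp only [mul_one]
    rw [hρsum, show (1 : ℝ) + ρ x * (b - 1) = (1 - ρ x) + ρ x * b from by ring]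
  rw [show (fun b => typeIIpgfQ k q lam ρ (Function.update (fun _ => 1) x b) t)
      = fun b : ℝ => Real.exp (-(∑ j : Fin k, lam j * (1 - ((1 - ρ x) + ρ x * b) ^ (j.1 + 1))) * t)
    from funext hfn, (expDeriv k lam t (1 - ρ x) (ρ x) 1).deriv,
    show (1 - ρ x) + ρ x * (1:ℝ) = 1 from by ring]
  simp

lemma derivTwo (k q : ℕ) (lam : Fin k → ℝ) (ρ : Fin q → ℝ) (hρsum : ∑ r : Fin q, ρ r = 1)
    (t : ℝ) (x y : Fin q) (hxy : x ≠ y) :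
    deriv (fun a => deriv
        (fun b => typeIIpgfQ k q lam ρ
          (Function.update (Function.update (fun _ => 1) y a) x b) t) 1) 1
      = ((∑ j : Fin k, lam j * ((j.1 : ℝ) + 1)) * ρ y * t)
          * ((∑ j : Fin k, lam j * ((j.1 : ℝ) + 1)) * ρ x * t)
        + (∑ j : Fin k, lam j * (((j.1 : ℝ) + 1) * ((j.1 : ℝ) * ρ y))) * ρ x * t := by
  have hfn2 : ∀ a b : ℝ, typeIIpgfQ k q lam ρ
      (Function.update (Function.update (fun _ => 1) y a) x b) t
      = Real.exp (-(∑ j : Fin k,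
          lam j * (1 - ((1 - ρ x - ρ y + ρ y * a) + ρ x * b) ^ (j.1 + 1))) * t) := by
    intro a b
    unfold typeIIpgfQ
    rw [sum_upd, sum_upd]
    simp only [mul_one]
    rw [hρsum, Function.update_of_ne hxy,
      show (1 : ℝ) + ρ y * (a - 1) + ρ x * (b - 1) = (1 - ρ x - ρ y + ρ y * a) + ρ x * b
        from by ring]
  have hinner : ∀ a : ℝ, deriv (fun b => typeIIpgfQ k q lam ρ
        (Function.update (Function.update (fun _ => 1) y a) x b) t) 1
      = Real.exp (-(∑ j : Fin k, lam j * (1 - ((1 - ρ y) + ρ y * a) ^ (j.1 + 1))) * t)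
        * ((∑ j : Fin k, lam j * ((j.1 + 1) * ((1 - ρ y) + ρ y * a) ^ j.1)) * ρ x * t) := by
    intro a
    rw [show (fun b => typeIIpgfQ k q lam ρ
          (Function.update (Function.update (fun _ => 1) y a) x b) t)
        = fun b : ℝ => Real.exp (-(∑ j : Fin k,
            lam j * (1 - ((1 - ρ x - ρ y + ρ y * a) + ρ x * b) ^ (j.1 + 1))) * t)
      from funext (hfn2 a), (expDeriv k lam t (1 - ρ x - ρ y + ρ y * a) (ρ x) 1).deriv,
      show (1 - ρ x - ρ y + ρ y * a) + ρ x * 1 = (1 - ρ y) + ρ y * a from by ring]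
  simp only [hinner]
  have hw : HasDerivAt (fun a : ℝ => (1 - ρ y) + ρ y * a) (ρ y) 1 := by
    simpa using ((hasDerivAt_id (1:ℝ)).const_mul (ρ y)).const_add (1 - ρ y)
  have hΦ1 := expDeriv k lam t (1 - ρ y) (ρ y) 1
  have hΦ2 : HasDerivAt
      (fun a : ℝ => (∑ j : Fin k, lam j * ((j.1 + 1) * ((1 - ρ y) + ρ y * a) ^ j.1)) * ρ x * t)
      ((∑ j : Fin k, lam j * ((j.1 + 1) * ((j.1 : ℝ) * ((1 - ρ y) + ρ y * 1) ^ (j.1 - 1) * ρ y)))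
        * ρ x * t) 1 := by
    apply HasDerivAt.mul_const
    apply HasDerivAt.mul_const
    apply HasDerivAt.fun_sum
    intro j _
    exact ((hw.pow j.1).const_mul ((j.1 : ℝ) + 1)).const_mul (lam j)
  rw [(hΦ1.fun_mul hΦ2).deriv, show (1 - ρ y) + ρ y * (1:ℝ) = 1 from by ring]
  simp only [one_pow, mul_one, sub_self, mul_zero, Finset.sum_const_zero, neg_zero, zero_mul,
    Real.exp_zero, one_mul]

lemma part2 {k q : ℕ} (lam : Fin k → ℝ) (ρ : Fin q → ℝ) (hρsum : ∑ r : Fin q, ρ r = 1)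
    (t : ℝ) (x y : Fin q) (hxy : x ≠ y) :
    (∑ j : Fin k,
        ∑ c ∈ (Fintype.piFinset fun _ : Fin q => Finset.range (j.1 + 2)).filter
          (fun c => ∑ r : Fin q, c r = j.1 + 1),
          ((Nat.factorial (j.1 + 1) : ℝ) / ∏ r : Fin q, (Nat.factorial (c r) : ℝ)) *
            (∏ r : Fin q, ρ r ^ (c r)) * (c x) * (c y) * lam j * t)
      = ρ x * ρ y * t * ∑ j : Fin k, (j.1 + 1) * j.1 * lam j := by
  have hset : ∀ n : ℕ, (Fintype.piFinset fun _ : Fin q => Finset.range (n + 2)).filter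
      (fun c => ∑ r : Fin q, c r = n + 1)
      = piAntidiag (Finset.univ : Finset (Fin q)) (n + 1) := by
    intro n
    ext c
    simp only [Finset.mem_filter, Fintype.mem_piFinset, Finset.mem_range, mem_piAntidiag,
      Finset.mem_univ, ne_eq, implies_true, and_true]
    constructor
    · exact fun h => h.2
    · intro h
      refine ⟨fun r => ?_, h⟩
      have : c r ≤ ∑ r : Fin q, c r := Finset.single_le_sum (fun i _ => Nat.zero_le _)
        (Finset.mem_univ r)
      rw [h] at this
      omega
  have hfac : ∀ (n : ℕ) (c : Fin q → ℕ), (∑ r : Fin q, c r = n + 1) →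
      ((Nat.factorial (n + 1) : ℝ) / ∏ r : Fin q, (Nat.factorial (c r) : ℝ))
        = (Nat.multinomial Finset.univ c : ℝ) := by
    intro n c hc
    have hs := Nat.multinomial_spec (Finset.univ : Finset (Fin q)) c
    rw [hc] at hs
    have hne : (∏ r : Fin q, ((Nat.factorial (c r) : ℝ))) ≠ 0 :=
      ne_of_gt (Finset.prod_pos fun i _ => by exact_mod_cast Nat.factorial_pos _)
    rw [div_eq_iff hne]
    exact_mod_cast ((mul_comm _ _).trans hs).symm
  have hterm : ∀ j : Fin k,
      (∑ c ∈ (Fintype.piFinset fun _ : Fin q => Finset.range (j.1 + 2)).filter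
        (fun c => ∑ r : Fin q, c r = j.1 + 1),
        ((Nat.factorial (j.1 + 1) : ℝ) / ∏ r : Fin q, (Nat.factorial (c r) : ℝ)) *
          (∏ r : Fin q, ρ r ^ (c r)) * (c x) * (c y) * lam j * t)
      = ρ x * ρ y * t * (((j.1 : ℝ) + 1) * j.1 * lam j) := by
    intro j
    rw [hset j.1]
    have h1 : (∑ c ∈ piAntidiag (Finset.univ : Finset (Fin q)) (j.1 + 1),
        ((Nat.factorial (j.1 + 1) : ℝ) / ∏ r : Fin q, (Nat.factorial (c r) : ℝ)) *
          (∏ r : Fin q, ρ r ^ (c r)) * (c x) * (c y) * lam j * t)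
        = (∑ c ∈ piAntidiag (Finset.univ : Finset (Fin q)) (j.1 + 1),
          (Nat.multinomial Finset.univ c : ℝ) * (∏ r : Fin q, ρ r ^ c r) * c x * c y)
          * (lam j * t) := by
      rw [Finset.sum_mul]
      apply Finset.sum_congr rfl
      intro c hc
      rw [← hfac j.1 c (mem_piAntidiag.1 hc).1]
      ring
    rw [h1, keyMulti ρ hρsum x y hxy (j.1 + 1)]
    simp only [Nat.add_sub_cancel]
    push_cast
    ring
  rw [Finset.sum_congr rfl fun j _ => hterm j, ← Finset.mul_sum]

theorem type_II_splitting_q_covariance (k : ℕ) (hk : 1 ≤ k) (q : ℕ) (hq : 1 ≤ q)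
    (lam : Fin k → ℝ) (hlam : ∀ j, 0 ≤ lam j)
    (ρ : Fin q → ℝ) (hρ : ∀ r, 0 ≤ ρ r) (hρsum : ∑ r : Fin q, ρ r = 1)
    (t : ℝ) (ht : 0 ≤ t) (x y : Fin q) (hxy : x ≠ y) :
    deriv (fun a => deriv
          (fun b => typeIIpgfQ k q lam ρ
            (Function.update (Function.update (fun _ => 1) y a) x b) t) 1) 1
        - deriv (fun b => typeIIpgfQ k q lam ρ (Function.update (fun _ => 1) x b) t) 1 *
          deriv (fun a => typeIIpgfQ k q lam ρ (Function.update (fun _ => 1) y a) t) 1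
      = ∑ j : Fin k,
          ∑ c ∈ (Fintype.piFinset fun _ : Fin q => Finset.range (j.1 + 2)).filter
            (fun c => ∑ r : Fin q, c r = j.1 + 1),
            ((Nat.factorial (j.1 + 1) : ℝ) / ∏ r : Fin q, (Nat.factorial (c r) : ℝ)) *
              (∏ r : Fin q, ρ r ^ (c r)) * (c x) * (c y) * lam j * t ∧
    (∑ j : Fin k,
        ∑ c ∈ (Fintype.piFinset fun _ : Fin q => Finset.range (j.1 + 2)).filter
          (fun c => ∑ r : Fin q, c r = j.1 + 1),
          ((Nat.factorial (j.1 + 1) : ℝ) / ∏ r : Fin q, (Nat.factorial (c r) : ℝ)) *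
            (∏ r : Fin q, ρ r ^ (c r)) * (c x) * (c y) * lam j * t)
      = ρ x * ρ y * t * ∑ j : Fin k, (j.1 + 1) * j.1 * lam j := by
  refine ⟨?_, part2 lam ρ hρsum t x y hxy⟩
  rw [derivTwo k q lam ρ hρsum t x y hxy, derivOne k q lam ρ hρsum t x,
    derivOne k q lam ρ hρsum t y, part2 lam ρ hρsum t x y hxy]
  have hs : (∑ j : Fin k, lam j * (((j.1 : ℝ) + 1) * ((j.1 : ℝ) * ρ y))) * ρ x * t
      = ρ x * ρ y * t * ∑ j : Fin k, ((j.1 : ℝ) + 1) * (j.1 : ℝ) * lam j := by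
    rw [Finset.mul_sum, Finset.sum_mul, Finset.sum_mul]
    exact Finset.sum_congr rfl fun j _ => by ring
  rw [hs]
  ring
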